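/- For the half-line quantum walk with coin parameter θ ≠ 0, π/2, π, 3π/2 and initial state (1/√2)|0⟩⊗(e^{-iθ}|0⟩ + i·e^{-iθ}|1⟩)·(normalized as stated), for every t ≥ 1 the probability of finding the walker at the rightmost reachable sites satisfies P(X_{2t}^{HL} = 2t) = P(X_{2t}^{HL} = 2t-1) = cos(θ)^{2(2t-1)}/2, and for every t ≥ 0, P(X_{2t+1}^{HL} = 2t+1) = P(X_{2t+1}^{HL} = 2t) = cos(θ)^{4t}/2. -/

import Mathlib

noncomputable def halfWalk (θ : ℝ) : ℕ → (ℕ → ℂ) × (ℕ → ℂ)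
  | 0 =>
      (fun x => if x = 0 then Complex.exp (-(θ : ℂ) * Complex.I) / (Real.sqrt 2 : ℂ) else 0,
       fun x => if x = 0 then Complex.I * Complex.exp (-(θ : ℂ) * Complex.I) / (Real.sqrt 2 : ℂ) else 0)
  | t + 1 =>
      (fun x => (Real.cos θ : ℂ) * (halfWalk θ t).1 (x + 1) + (Real.sin θ : ℂ) * (halfWalk θ t).2 (x + 1),
       fun x =>
         if x = 0 then (Real.cos θ : ℂ) * (halfWalk θ t).1 0 + (Real.sin θ : ℂ) * (halfWalk θ t).2 0
         else (Real.sin θ : ℂ) * (halfWalk θ t).1 (x - 1) - (Real.cos θ : ℂ) * (halfWalk θ t).2 (x - 1))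

lemma hw_supp (θ : ℝ) : ∀ t x : ℕ, t + 1 ≤ x →
    (halfWalk θ t).1 x = 0 ∧ (halfWalk θ t).2 x = 0 := by
  intro t
  induction t with
  | zero =>
    intro x hx
    have : x ≠ 0 := by omega
    simp [halfWalk, this]
  | succ t ih =>
    intro x hx
    obtain ⟨a1, b1⟩ := ih (x + 1) (by omega)
    obtain ⟨a2, b2⟩ := ih (x - 1) (by omega)
    have hx0 : x ≠ 0 := by omega
    constructor
    · simp [halfWalk, a1, b1]
    · simp [halfWalk, hx0, a2, b2]

lemma hw_alpha_zero (θ : ℝ) : ∀ t x : ℕ, 1 ≤ t → t - 1 ≤ x →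
    (halfWalk θ t).1 x = 0 := by
  intro t x ht hx
  obtain ⟨u, rfl⟩ : ∃ u, t = u + 1 := ⟨t - 1, by omega⟩
  obtain ⟨a1, b1⟩ := hw_supp θ u (x + 1) (by omega)
  simp [halfWalk, a1, b1]

lemma exp_neg_theta (θ : ℝ) :
    Complex.exp (-(θ : ℂ) * Complex.I)
      = Complex.cos (θ : ℂ) - Complex.sin (θ : ℂ) * Complex.I := by
  rw [Complex.exp_mul_I, Complex.cos_neg, Complex.sin_neg]
  ring

lemma hw_frontier (θ : ℝ) : ∀ t : ℕ, 1 ≤ t →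
    (halfWalk θ t).2 t
        = (-(Real.cos θ : ℂ)) ^ (t - 1) * ((Real.sin θ : ℂ) - Complex.I * (Real.cos θ : ℂ))
            * Complex.exp (-(θ : ℂ) * Complex.I) / (Real.sqrt 2 : ℂ) ∧
    (halfWalk θ t).2 (t - 1) = (-(Real.cos θ : ℂ)) ^ (t - 1) / (Real.sqrt 2 : ℂ) := by
  have pyth : Complex.cos (θ : ℂ) ^ 2 + Complex.sin (θ : ℂ) ^ 2 = 1 :=
    Complex.cos_sq_add_sin_sq _
  have hs2 : ((Real.sqrt 2 : ℝ) : ℂ) ≠ 0 := by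
    norm_cast
    positivity
  intro t
  induction t with
  | zero => omega
  | succ t ih =>
    intro _
    rcases Nat.eq_zero_or_pos t with rfl | ht
    · constructor
      · simp [halfWalk]
        ring
      · simp [halfWalk]
        rw [← neg_mul, exp_neg_theta]
        field_simp
        linear_combination pyth - Complex.sin (θ:ℂ)^2 * Complex.I_sq
    · obtain ⟨hb1, hb2⟩ := ih ht
      have ht1 : t + 1 - 1 = t := rfl
      have ha1 : (halfWalk θ t).1 t = 0 := hw_alpha_zero θ t t ht (by omega)
      have ha2 : (halfWalk θ t).1 (t - 1) = 0 := hw_alpha_zero θ t (t - 1) ht (by omega)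
      have hpow : (-(Real.cos θ : ℂ)) ^ t = -(Real.cos θ : ℂ) * (-(Real.cos θ : ℂ)) ^ (t - 1) := by
        conv_lhs => rw [show t = (t - 1) + 1 by omega]
        ring
      constructor
      · show (halfWalk θ (t + 1)).2 (t + 1) = _
        simp only [halfWalk, ht1]
        rw [if_neg (by omega)]
        simp only [Nat.add_sub_cancel, ha1, hb1, hpow]
        ring
      · show (halfWalk θ (t + 1)).2 t = _
        simp only [halfWalk, ht1]
        rw [if_neg (by omega)]
        simp only [ha2, hb2, hpow]
        ring

theorem half_line_rightmost_probability (θ : ℝ) (hθ : θ ∈ Set.Ico 0 (2 * Real.pi))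
    (h0 : θ ≠ 0) (h1 : θ ≠ Real.pi / 2) (h2 : θ ≠ Real.pi) (h3 : θ ≠ 3 * Real.pi / 2) :
    (∀ t : ℕ, 1 ≤ t →
        ‖(halfWalk θ (2 * t)).1 (2 * t)‖ ^ 2
            + ‖(halfWalk θ (2 * t)).2 (2 * t)‖ ^ 2
          = Real.cos θ ^ (2 * (2 * t - 1)) / 2 ∧
        ‖(halfWalk θ (2 * t)).1 (2 * t - 1)‖ ^ 2
            + ‖(halfWalk θ (2 * t)).2 (2 * t - 1)‖ ^ 2
          = Real.cos θ ^ (2 * (2 * t - 1)) / 2) ∧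
    (∀ t : ℕ,
        ‖(halfWalk θ (2 * t + 1)).1 (2 * t + 1)‖ ^ 2
            + ‖(halfWalk θ (2 * t + 1)).2 (2 * t + 1)‖ ^ 2
          = Real.cos θ ^ (4 * t) / 2 ∧
        ‖(halfWalk θ (2 * t + 1)).1 (2 * t)‖ ^ 2
            + ‖(halfWalk θ (2 * t + 1)).2 (2 * t)‖ ^ 2
          = Real.cos θ ^ (4 * t) / 2) := by
  have key : ∀ T : ℕ, 1 ≤ T →
      (‖(halfWalk θ T).1 T‖ ^ 2 + ‖(halfWalk θ T).2 T‖ ^ 2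
        = Real.cos θ ^ (2 * (T - 1)) / 2) ∧
      (‖(halfWalk θ T).1 (T - 1)‖ ^ 2 + ‖(halfWalk θ T).2 (T - 1)‖ ^ 2
        = Real.cos θ ^ (2 * (T - 1)) / 2) := by
    intro T hT
    obtain ⟨hb1, hb2⟩ := hw_frontier θ T hT
    have ha1 : (halfWalk θ T).1 T = 0 := hw_alpha_zero θ T T hT (by omega)
    have ha2 : (halfWalk θ T).1 (T - 1) = 0 := hw_alpha_zero θ T (T - 1) hT (by omega)
    have hpow : ‖(-(Real.cos θ : ℂ)) ^ (T - 1)‖ ^ 2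
        = Real.cos θ ^ (2 * (T - 1)) := by
      rw [norm_pow, norm_neg, Complex.norm_real, Real.norm_eq_abs, ← pow_mul, mul_comm (T-1) 2, pow_mul,
        sq_abs, ← pow_mul]
    have hexp : ‖Complex.exp (-(θ : ℂ) * Complex.I)‖ = 1 := by
      rw [show -(θ : ℂ) * Complex.I = ((-θ : ℝ) : ℂ) * Complex.I by push_cast; ring]
      exact Complex.norm_exp_ofReal_mul_I (-θ)
    have hmid : ‖(Real.sin θ : ℂ) - Complex.I * (Real.cos θ : ℂ)‖ ^ 2 = 1 := by
      have hrw : (Real.sin θ : ℂ) - Complex.I * (Real.cos θ : ℂ)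
          = ((Real.sin θ : ℝ) : ℂ) + ((-Real.cos θ : ℝ) : ℂ) * Complex.I := by
        push_cast; ring
      rw [Complex.sq_norm, hrw, Complex.normSq_add_mul_I, neg_sq]
      exact_mod_cast Real.sin_sq_add_cos_sq θ
    have hsq2 : ‖((Real.sqrt 2 : ℝ) : ℂ)‖ ^ 2 = 2 := by
      rw [Complex.norm_real, Real.norm_eq_abs, sq_abs, Real.sq_sqrt (by norm_num)]
    constructor
    · have e1 : ‖(halfWalk θ T).2 T‖ ^ 2 = Real.cos θ ^ (2 * (T - 1)) / 2 := by
        rw [hb1, norm_div, norm_mul, norm_mul, hexp, mul_one, div_pow, mul_pow, hpow, hmid,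
          mul_one, hsq2]
      rw [ha1, e1]
      norm_num
    · have e2 : ‖(halfWalk θ T).2 (T - 1)‖ ^ 2 = Real.cos θ ^ (2 * (T - 1)) / 2 := by
        rw [hb2, norm_div, div_pow, hpow, hsq2]
      rw [ha2, e2]
      norm_num
  constructor
  · intro t ht
    exact key (2 * t) (by omega)
  · intro t
    have h := key (2 * t + 1) (by omega)
    have e : 2 * (2 * t + 1 - 1) = 4 * t := by omega
    rw [e] at h
    simpa using h
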